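/- Let R be a term rewrite system such that |MSDC(r)| = 1 for every rule ℓ → r ∈ R. Then for every rule ℓ → r ∈ R, DTpar(ℓ → r) = { DT(ℓ → r) }, where DT(ℓ → r) is formed using any total order on positions that extends the strict prefix order on PosD(r); consequently DTpar(R) = DT(R). -/

import Mathlib

namespace ParallelComplexity

/-! ## First-order terms -/

inductive Term (σ : Type) (V : Type) : Type where
  | var : V → Term σ V
  | fn : σ → List (Term σ V) → Term σ V

variable {σ V : Type}

mutual
  /-- Application of a substitution to a term. -/
  def Term.subst (θ : V → Term σ V) : Term σ V → Term σ V
    | Term.var x => θ x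
    | Term.fn f ts => Term.fn f (Term.substList θ ts)
  def Term.substList (θ : V → Term σ V) : List (Term σ V) → List (Term σ V)
    | [] => []
    | t :: ts => Term.subst θ t :: Term.substList θ ts
end

mutual
  /-- The size |t| of a term. -/
  def Term.size : Term σ V → ℕ
    | Term.var _ => 1
    | Term.fn _ ts => 1 + Term.sizeList ts
  def Term.sizeList : List (Term σ V) → ℕ
    | [] => 0
    | t :: ts => Term.size t + Term.sizeList ts
end

/-- Subterm `t|π` at a position (positions are lists of argument indices);
`none` if the position is not a position of `t`. -/
def Term.subtermAt : Term σ V → List ℕ → Option (Term σ V)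
  | t, [] => some t
  | Term.var _, _ :: _ => none
  | Term.fn _ ts, i :: π =>
    match ts[i]? with
    | none => none
    | some u => Term.subtermAt u π

/-- `t[s]π`: replacement of the subterm at position `π` by `s`. -/
def Term.replaceAt : Term σ V → List ℕ → Term σ V → Option (Term σ V)
  | _, [], s => some s
  | Term.var _, _ :: _, _ => none
  | Term.fn f ts, i :: π, s =>
    match ts[i]? with
    | none => none
    | some u =>
      match Term.replaceAt u π s with
      | none => none
      | some u' => some (Term.fn f (ts.set i u'))

def Term.isVar (t : Term σ V) : Prop := ∃ x, t = Term.var x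

/-- `x` occurs as a variable in the term. -/
inductive Term.VarIn (x : V) : Term σ V → Prop
  | var : Term.VarIn x (Term.var x)
  | fn {f : σ} {ts : List (Term σ V)} {t : Term σ V} :
      t ∈ ts → Term.VarIn x t → Term.VarIn x (Term.fn f ts)

/-! ## Term rewrite systems -/

structure Rule (σ V : Type) where
  lhs : Term σ V
  rhs : Term σ V

/-- A well-formed TRS: a finite set of rules `ℓ → r` with `ℓ ∉ V` and
`Var(r) ⊆ Var(ℓ)`. -/
def IsWfTRS (R : Set (Rule σ V)) : Prop :=
  R.Finite ∧ (∀ r ∈ R, ¬ r.lhs.isVar) ∧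
    ∀ r ∈ R, ∀ x : V, Term.VarIn x r.rhs → Term.VarIn x r.lhs

def IsRedex (R : Set (Rule σ V)) (t : Term σ V) : Prop :=
  ∃ r ∈ R, ∃ θ : V → Term σ V, t = Term.subst θ r.lhs

/-- An innermost redex: a redex none of whose proper subterms is a redex. -/
def IsInnermostRedex (R : Set (Rule σ V)) (t : Term σ V) : Prop :=
  IsRedex R t ∧
    ∀ π : List ℕ, π ≠ [] → ∀ u, t.subtermAt π = some u → ¬ IsRedex R u

/-- One rewrite step at position `π`. -/
def RewriteAt (R : Set (Rule σ V)) (π : List ℕ) (s t : Term σ V) : Prop :=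
  ∃ r ∈ R, ∃ θ : V → Term σ V,
    s.subtermAt π = some (Term.subst θ r.lhs) ∧
    s.replaceAt π (Term.subst θ r.rhs) = some t

/-- The rewrite relation `s →_R t`. -/
def Rewrite (R : Set (Rule σ V)) (s t : Term σ V) : Prop := ∃ π, RewriteAt R π s t

/-- The innermost rewrite relation `s →i t`. -/
def InnermostRewrite (R : Set (Rule σ V)) (s t : Term σ V) : Prop :=
  ∃ π, ∃ r ∈ R, ∃ θ : V → Term σ V,
    s.subtermAt π = some (Term.subst θ r.lhs) ∧
    IsInnermostRedex R (Term.subst θ r.lhs) ∧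
    s.replaceAt π (Term.subst θ r.rhs) = some t

def NormalForm (R : Set (Rule σ V)) (t : Term σ V) : Prop := ¬ ∃ u, Rewrite R t u

/-- Parallel-innermost rewriting `s ⇉ t`: `s →i⁺ t` and either
(a) `s` is an innermost redex and `s →i t`, or (b) `s = f(s₁,…,sₙ)`,
`t = f(t₁,…,tₙ)` and each `sₖ ⇉ tₖ` or `sₖ = tₖ` is a normal form. -/
inductive ParInnermost (R : Set (Rule σ V)) : Term σ V → Term σ V → Prop
  | redex {s t : Term σ V} :
      Relation.TransGen (InnermostRewrite R) s t →
      IsInnermostRedex R s → InnermostRewrite R s t → ParInnermost R s t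
  | congr (f : σ) (ss ts : List (Term σ V)) :
      Relation.TransGen (InnermostRewrite R) (Term.fn f ss) (Term.fn f ts) →
      ss.length = ts.length →
      -- each `sₖ ⇉ tₖ`, or `sₖ = tₖ` is a normal form (stated as the
      -- classically equivalent implication to satisfy the kernel's
      -- restrictions on nested inductive occurrences)
      (∀ p ∈ ss.zip ts, ¬ (p.1 = p.2 ∧ NormalForm R p.1) → ParInnermost R p.1 p.2) →
      ParInnermost R (Term.fn f ss) (Term.fn f ts)

/-! ## Abstract properties of relations -/

def Confluent {α : Type} (r : α → α → Prop) : Prop :=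
  ∀ s t u, Relation.ReflTransGen r s t → Relation.ReflTransGen r s u →
    ∃ v, Relation.ReflTransGen r t v ∧ Relation.ReflTransGen r u v

def Deterministic {α : Type} (r : α → α → Prop) : Prop :=
  ∀ s t u, r s t → r s u → t = u

def UniformlyConfluent {α : Type} (r : α → α → Prop) : Prop :=
  ∀ s t u, r s t → r s u → t = u ∨ ∃ v, r t v ∧ r u v

/-! ## Derivation height and runtime complexity -/

/-- `e`-th iterate of a relation. -/
def iterRel {α : Type} (r : α → α → Prop) : ℕ → α → α → Prop
  | 0 => fun a b => a = b
  | n + 1 => fun a c => ∃ b, r a b ∧ iterRel r n b c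

/-- Derivation height `Dh(t, →) = sup { e | ∃ t'. t →^e t' } ∈ ℕ ∪ {ω}`. -/
noncomputable def Dh {α : Type} (r : α → α → Prop) (t : α) : ℕ∞ :=
  sSup { e : ℕ∞ | ∃ n : ℕ, e = (n : ℕ∞) ∧ ∃ t', iterRel r n t t' }

/-- Defined symbols: root symbols of left-hand sides. -/
def Defined (R : Set (Rule σ V)) (f : σ) : Prop :=
  ∃ r ∈ R, ∃ ts : List (Term σ V), r.lhs = Term.fn f ts

def HasDefinedRoot (R : Set (Rule σ V)) (t : Term σ V) : Prop :=
  ∃ f ts, t = Term.fn f ts ∧ Defined R f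

/-- Constructor terms: terms over constructor symbols and variables. -/
inductive ConsTerm (R : Set (Rule σ V)) : Term σ V → Prop
  | var (x : V) : ConsTerm R (Term.var x)
  | fn (f : σ) (ts : List (Term σ V)) :
      ¬ Defined R f → (∀ t ∈ ts, ConsTerm R t) → ConsTerm R (Term.fn f ts)

/-- Basic terms: a defined symbol applied to constructor terms. -/
def BasicTerm (R : Set (Rule σ V)) (t : Term σ V) : Prop :=
  ∃ f ts, t = Term.fn f ts ∧ Defined R f ∧ ∀ u ∈ ts, ConsTerm R u

/-- Innermost runtime complexity. -/
noncomputable def irc (R : Set (Rule σ V)) (n : ℕ) : ℕ∞ :=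
  sSup { d : ℕ∞ | ∃ t, BasicTerm R t ∧ t.size ≤ n ∧ d = Dh (InnermostRewrite R) t }

/-- Parallel-innermost runtime complexity. -/
noncomputable def pirc (R : Set (Rule σ V)) (n : ℕ) : ℕ∞ :=
  sSup { d : ℕ∞ | ∃ t, BasicTerm R t ∧ t.size ≤ n ∧ d = Dh (ParInnermost R) t }

/-! ## Critical pairs -/

def RuleVars (r : Rule σ V) : Set V :=
  { x | Term.VarIn x r.lhs ∨ Term.VarIn x r.rhs }

/-- `r₂` is a variant of `r₁` (each is a substitution instance of the other). -/
def IsVariantOf (r₁ r₂ : Rule σ V) : Prop :=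
  ∃ θ₁ θ₂ : V → Term σ V,
    r₂.lhs = Term.subst θ₁ r₁.lhs ∧ r₂.rhs = Term.subst θ₁ r₁.rhs ∧
    r₁.lhs = Term.subst θ₂ r₂.lhs ∧ r₁.rhs = Term.subst θ₂ r₂.rhs

def Unifies (θ : V → Term σ V) (s t : Term σ V) : Prop :=
  Term.subst θ s = Term.subst θ t

def IsMGU (μ : V → Term σ V) (s t : Term σ V) : Prop :=
  Unifies μ s t ∧
    ∀ δ : V → Term σ V, Unifies δ s t →
      ∃ δ' : V → Term σ V, ∀ x : V, Term.subst δ' (μ x) = δ x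

/-- Critical pairs `⟨uσ[rσ]π, vσ⟩` of a TRS, from variable-renamed copies
`ℓ → r` and `u → v` of rules of `R` overlapping at a non-variable position
`π` of `u` (not a root overlap of variants of the same rule). -/
def CriticalPair (R : Set (Rule σ V)) (cp : Term σ V × Term σ V) : Prop :=
  ∃ r₁ r₂ r₁' r₂' : Rule σ V, r₁' ∈ R ∧ r₂' ∈ R ∧
    IsVariantOf r₁' r₁ ∧ IsVariantOf r₂' r₂ ∧
    (∀ x : V, x ∈ RuleVars r₁ → x ∉ RuleVars r₂) ∧
    ∃ (π : List ℕ) (u' : Term σ V),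
      r₂.lhs.subtermAt π = some u' ∧ ¬ u'.isVar ∧
      (π = [] → ¬ IsVariantOf r₁ r₂) ∧
      ∃ μ : V → Term σ V, IsMGU μ r₁.lhs u' ∧
        ∃ w : Term σ V,
          (Term.subst μ r₂.lhs).replaceAt π (Term.subst μ r₁.rhs) = some w ∧
          cp = (w, Term.subst μ r₂.rhs)

/-- `R` is non-overlapping iff it has no critical pairs. -/
def NonOverlapping (R : Set (Rule σ V)) : Prop := ∀ cp, ¬ CriticalPair R cp

/-- An innermost critical overlay: a critical pair at the root position whose
critical peak consists of two innermost rewrite steps. -/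
def InnermostCriticalOverlay (R : Set (Rule σ V)) (cp : Term σ V × Term σ V) : Prop :=
  ∃ r₁ r₂ r₁' r₂' : Rule σ V, r₁' ∈ R ∧ r₂' ∈ R ∧
    IsVariantOf r₁' r₁ ∧ IsVariantOf r₂' r₂ ∧
    (∀ x : V, x ∈ RuleVars r₁ → x ∉ RuleVars r₂) ∧
    ¬ IsVariantOf r₁ r₂ ∧
    ∃ μ : V → Term σ V, IsMGU μ r₁.lhs r₂.lhs ∧
      IsInnermostRedex R (Term.subst μ r₂.lhs) ∧
      cp = (Term.subst μ r₁.rhs, Term.subst μ r₂.rhs)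

/-! ## Positions with defined symbols and structural dependency chains -/

/-- Strict prefix order on positions: `PosGT τ π` iff `τ > π`,
i.e. `∃ π' ≠ ε, π π' = τ`. -/
def PosGT (τ π : List ℕ) : Prop := ∃ π' : List ℕ, π' ≠ [] ∧ π ++ π' = τ

/-- `PosD(t)`: positions of `t` with defined root symbol. -/
def PosD (R : Set (Rule σ V)) (t : Term σ V) : Set (List ℕ) :=
  { π | ∃ u, t.subtermAt π = some u ∧ HasDefinedRoot R u }

/-- Structural dependency chain `⟨π₁,…,πₖ⟩` for `t`: positions in `PosD(t)`
with `π₁ > … > πₖ`. -/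
def SDChain (R : Set (Rule σ V)) (t : Term σ V) (c : List (List ℕ)) : Prop :=
  (∀ π ∈ c, π ∈ PosD R t) ∧ c.Chain' PosGT

/-- Maximal structural dependency chains: `MSDC R t c` iff `c` is a maximal
structural dependency chain for `t`. -/
def MSDC (R : Set (Rule σ V)) (t : Term σ V) (c : List (List ℕ)) : Prop :=
  SDChain R t c ∧
    ((c = [] ∧ PosD R t = ∅) ∨
      ∃ (π₁ : List ℕ) (rest : List (List ℕ)), c = π₁ :: rest ∧
        ∀ π ∈ PosD R t, ¬ PosGT π π₁ ∧ (PosGT π₁ π → π ∈ rest))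

/-! ## Sharp terms, dependency tuples -/

/-- Extended signature: base symbols, sharp symbols `f#`, compound symbols `Com_n`. -/
inductive SharpSym (σ : Type) : Type where
  | base : σ → SharpSym σ
  | sharp : σ → SharpSym σ
  | com : ℕ → SharpSym σ

mutual
  def Term.embed : Term σ V → Term (SharpSym σ) V
    | Term.var x => Term.var x
    | Term.fn f ts => Term.fn (SharpSym.base f) (Term.embedList ts)
  def Term.embedList : List (Term σ V) → List (Term (SharpSym σ) V)
    | [] => []
    | t :: ts => Term.embed t :: Term.embedList ts
end

open Classical in
/-- `t#`: mark the root of `t` with its sharp symbol (if defined). -/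
noncomputable def Term.sharp (R : Set (Rule σ V)) : Term σ V → Term (SharpSym σ) V
  | Term.var x => Term.var x
  | Term.fn f ts =>
    if Defined R f then Term.fn (SharpSym.sharp f) (Term.embedList ts)
    else Term.fn (SharpSym.base f) (Term.embedList ts)

open Classical in
/-- Sharping on terms over the extended signature: for `t = f(…)` with `f` a
defined (base) symbol of `R`, mark the root; otherwise `t# = t`. -/
noncomputable def sharpC (R : Set (Rule σ V)) : Term (SharpSym σ) V → Term (SharpSym σ) V
  | Term.fn (SharpSym.base f) ts =>
    if Defined R f then Term.fn (SharpSym.sharp f) ts else Term.fn (SharpSym.base f) ts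
  | t => t

def liftRule (r : Rule σ V) : Rule (SharpSym σ) V :=
  { lhs := r.lhs.embed, rhs := r.rhs.embed }

def liftRules (R : Set (Rule σ V)) : Set (Rule (SharpSym σ) V) := liftRule '' R

/-- The dependency tuple `ℓ# → Com_k(u₁#,…,uₖ#)` built from subterms `u₁,…,uₖ`
of the right-hand side. -/
noncomputable def mkDT (R : Set (Rule σ V)) (ρ : Rule σ V) (us : List (Term σ V)) :
    Rule (SharpSym σ) V :=
  { lhs := Term.sharp R ρ.lhs,
    rhs := Term.fn (SharpSym.com us.length) (us.map (Term.sharp R)) }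

/-- `DTpar(ℓ → r)`: one dependency tuple per maximal structural dependency chain. -/
def DTparRule (R : Set (Rule σ V)) (ρ : Rule σ V) : Set (Rule (SharpSym σ) V) :=
  { d | ∃ (c : List (List ℕ)) (us : List (Term σ V)),
      MSDC R ρ.rhs c ∧
      List.Forall₂ (fun π u => ρ.rhs.subtermAt π = some u) c us ∧
      d = mkDT R ρ us }

/-- `DTpar(R)`. -/
def DTparSet (R : Set (Rule σ V)) : Set (Rule (SharpSym σ) V) :=
  ⋃ ρ ∈ R, DTparRule R ρ

/-! ## Chain trees and Cplx -/

/-- A (possibly infinite, finitely branching) tree whose nodes (addressed by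
paths) are labelled with a dependency tuple and a substitution; the child at
direction `i` corresponds to argument `i` of the `Com` symbol. -/
structure ChainTree (σ V : Type) where
  label : List ℕ → Option (Rule (SharpSym σ) V × (V → Term (SharpSym σ) V))

/-- `T` is a `(D,R)`-chain tree for the sharp term `t`. -/
def IsChainTree (D R : Set (Rule (SharpSym σ) V)) (T : ChainTree σ V)
    (t : Term (SharpSym σ) V) : Prop :=
  (∃ r ν, T.label [] = some (r, ν) ∧ Term.subst ν r.lhs = t) ∧
  (∀ (p : List ℕ) (i : ℕ), T.label (p ++ [i]) ≠ none → T.label p ≠ none) ∧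
  (∀ (p : List ℕ) (r : Rule (SharpSym σ) V) (ν : V → Term (SharpSym σ) V),
    T.label p = some (r, ν) →
      r ∈ D ∧ NormalForm R (Term.subst ν r.lhs) ∧
      ∀ (i : ℕ) (r' : Rule (SharpSym σ) V) (δ : V → Term (SharpSym σ) V),
        T.label (p ++ [i]) = some (r', δ) →
          ∃ (m : ℕ) (vs : List (Term (SharpSym σ) V)),
            r.rhs = Term.fn (SharpSym.com m) vs ∧
            ∃ v, vs[i]? = some v ∧
              Relation.ReflTransGen (InnermostRewrite R)
                (Term.subst ν v) (Term.subst δ r'.lhs))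

/-- `|T|_S`: the number of nodes of `T` labelled with a DT from `S`. -/
noncomputable def treeCount (T : ChainTree σ V) (S : Set (Rule (SharpSym σ) V)) : ℕ∞ :=
  Set.encard { p : List ℕ | ∃ r ν, T.label p = some (r, ν) ∧ r ∈ S }

/-- `Cplx⟨D,S,R⟩(t)`: the supremum of `|T|_S` over all `(D,R)`-chain trees `T`
for `t` (`0` if there is no chain tree). -/
noncomputable def Cplx (D S R : Set (Rule (SharpSym σ) V))
    (t : Term (SharpSym σ) V) : ℕ∞ :=
  sSup { c : ℕ∞ | ∃ T : ChainTree σ V, IsChainTree D R T t ∧ c = treeCount T S }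

/-- `irc⟨D,S,R⟩(n)`: runtime complexity of a DT problem. -/
noncomputable def ircDTP (D S : Set (Rule (SharpSym σ) V)) (R : Set (Rule σ V))
    (n : ℕ) : ℕ∞ :=
  sSup { c : ℕ∞ | ∃ t : Term σ V, BasicTerm R t ∧ t.size ≤ n ∧
    c = Cplx D S (liftRules R) (Term.sharp R t) }

/-! ## Relative rewriting -/

/-- An innermost rewrite step using a rule from `X`, with innermost-ness
relative to the whole system `W`. -/
def InnermostRewriteSub (W X : Set (Rule σ V)) (s t : Term σ V) : Prop :=
  ∃ π, ∃ r ∈ X, ∃ θ : V → Term σ V,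
    s.subtermAt π = some (Term.subst θ r.lhs) ∧
    IsInnermostRedex W (Term.subst θ r.lhs) ∧
    s.replaceAt π (Term.subst θ r.rhs) = some t

/-- Innermost relative rewriting `→i_{A/B}`:
`s →B* s' →A s'' →B* t`, all steps innermost wrt `A ∪ B`. -/
def RelInnermost (A B : Set (Rule σ V)) (s t : Term σ V) : Prop :=
  ∃ s' s'' : Term σ V,
    Relation.ReflTransGen (InnermostRewriteSub (A ∪ B) B) s s' ∧
    InnermostRewriteSub (A ∪ B) A s' s'' ∧
    Relation.ReflTransGen (InnermostRewriteSub (A ∪ B) B) s'' t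

/-- Innermost runtime complexity of a relative TRS `A/B`. -/
noncomputable def ircRel (A B : Set (Rule σ V)) (n : ℕ) : ℕ∞ :=
  sSup { d : ℕ∞ | ∃ t : Term σ V, BasicTerm (A ∪ B) t ∧ t.size ≤ n ∧
    d = Dh (RelInnermost A B) t }

/-! ## Dependency tuples (abstract DT problems) -/

inductive IsBaseTerm : Term (SharpSym σ) V → Prop
  | var (x : V) : IsBaseTerm (Term.var x)
  | fn (f : σ) (ts : List (Term (SharpSym σ) V)) :
      (∀ t ∈ ts, IsBaseTerm t) → IsBaseTerm (Term.fn (SharpSym.base f) ts)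

def IsSharpTerm (t : Term (SharpSym σ) V) : Prop :=
  ∃ (f : σ) (args : List (Term (SharpSym σ) V)),
    t = Term.fn (SharpSym.sharp f) args ∧ ∀ a ∈ args, IsBaseTerm a

/-- A dependency tuple: a rule `s# → Com_n(t₁#,…,tₙ#)`. -/
def IsDT (r : Rule (SharpSym σ) V) : Prop :=
  IsSharpTerm r.lhs ∧
    ∃ (n : ℕ) (ts : List (Term (SharpSym σ) V)),
      r.rhs = Term.fn (SharpSym.com n) ts ∧ ts.length = n ∧ ∀ t ∈ ts, IsSharpTerm t

/-! ## Argument normal forms -/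

/-- Argument normal form: a variable, or a term all of whose direct arguments
are normal forms. -/
def ArgNF (R : Set (Rule σ V)) (t : Term σ V) : Prop :=
  (∃ x, t = Term.var x) ∨ ∃ f ts, t = Term.fn f ts ∧ ∀ u ∈ ts, NormalForm R u

/-- A parallel-innermost step all of whose rewrites are at positions strictly
below the root. -/
def ParInnermostBelow (R : Set (Rule σ V)) (s t : Term σ V) : Prop :=
  ParInnermost R s t ∧ ¬ IsInnermostRedex R s

/-- `b` is a maximal parallel argument normal form of `u`. -/
noncomputable def MaxANF (R : Set (Rule σ V)) (u b : Term σ V) : Prop :=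
  ArgNF R b ∧ Relation.ReflTransGen (ParInnermostBelow R) u b ∧
    ∀ u', ArgNF R u' → Relation.ReflTransGen (ParInnermostBelow R) u u' →
      Dh (ParInnermost R) u' ≤ Dh (ParInnermost R) b

/-! ## Many-sorted type assignments -/

/-- Well-typedness of a term wrt a sort set `St`, a type assignment `arty`
(argument sorts and result sort for each symbol) and variable typing `vty`. -/
inductive WellTyped {τ : Type} (St : Type) (arty : τ → List St × St) (vty : V → St) :
    Term τ V → St → Prop
  | var (x : V) : WellTyped St arty vty (Term.var x) (vty x)
  | fn (f : τ) (ts : List (Term τ V)) :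
      ts.length = (arty f).1.length →
      (∀ p ∈ ts.zip (arty f).1, WellTyped St arty vty p.1 p.2) →
      WellTyped St arty vty (Term.fn f ts) (arty f).2

/-- A strict total order on positions extending the strict prefix order. -/
def TotalExtOfPrefix (gt' : List ℕ → List ℕ → Prop) : Prop :=
  (∀ π τ, PosGT π τ → gt' π τ) ∧
  (∀ π τ ρ, gt' π τ → gt' τ ρ → gt' π ρ) ∧
  (∀ π τ, gt' π τ → ¬ gt' τ π) ∧
  (∀ π τ, π ≠ τ → gt' π τ ∨ gt' τ π)


/-! ### Auxiliary lemmas for Statement 3 -/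

section Aux3

variable {σ V : Type}

theorem posGT_trans' {a b c : List ℕ} (h1 : PosGT a b) (h2 : PosGT b c) : PosGT a c := by
  obtain ⟨p, hp, hpa⟩ := h1
  obtain ⟨q, hq, hqb⟩ := h2
  exact ⟨q ++ p, by simp [hq], by rw [← hpa, ← hqb, List.append_assoc]⟩

instance : IsTrans (List ℕ) PosGT := ⟨fun _ _ _ => posGT_trans'⟩

theorem posGT_length {a b : List ℕ} (h : PosGT a b) : b.length < a.length := by
  obtain ⟨p, hp, hpa⟩ := h
  subst hpa
  have := List.length_pos_iff.2 hp
  simp only [List.length_append]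
  omega

theorem posGT_ne {a b : List ℕ} (h : PosGT a b) : a ≠ b := by
  intro he; subst he; exact absurd rfl (posGT_length h).ne

theorem prefix_of_posGT {a b : List ℕ} (h : PosGT a b) : b <+: a := by
  obtain ⟨p, _, hpa⟩ := h; exact ⟨p, hpa⟩

theorem posGT_of_prefix_ne {a b : List ℕ} (h : b <+: a) (hne : b ≠ a) : PosGT a b := by
  obtain ⟨s, hs⟩ := h
  refine ⟨s, ?_, hs⟩
  rintro rfl; simp at hs; exact hne hs

theorem Term.size_pos : ∀ t : Term σ V, 0 < t.size
  | Term.var _ => by simp [Term.size]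
  | Term.fn f ts => by simp [Term.size]

theorem sizeList_bound : ∀ (ts : List (Term σ V)) (i : ℕ) (u : Term σ V),
    ts[i]? = some u → Term.size u ≤ Term.sizeList ts := by
  intro ts
  induction ts with
  | nil => intro i u h; simp at h
  | cons t ts ih =>
    intro i u h
    cases i with
    | zero => simp at h; subst h; simp [Term.sizeList]
    | succ i =>
      simp only [List.getElem?_cons_succ] at h
      have := ih i u h
      simp [Term.sizeList]
      have := Term.size_pos t
      omega

theorem subtermAt_length : ∀ (π : List ℕ) (t : Term σ V) (u : Term σ V),
    t.subtermAt π = some u → π.length < t.size := by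
  intro π
  induction π with
  | nil => intro t u _; exact Term.size_pos t
  | cons i π ih =>
    intro t u h
    cases t with
    | var x => simp [Term.subtermAt] at h
    | fn f ts =>
      cases h' : ts[i]? with
      | none => simp [Term.subtermAt, h'] at h
      | some u' =>
        simp only [Term.subtermAt, h'] at h
        have h1 := ih u' u h
        have h2 := sizeList_bound ts i u' h'
        simp only [List.length_cons, Term.size]
        omega

theorem posD_length {R : Set (Rule σ V)} {t : Term σ V} {π : List ℕ}
    (h : π ∈ PosD R t) : π.length < t.size := by
  obtain ⟨u, hu, _⟩ := h
  exact subtermAt_length π t u hu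

theorem exists_max_posD {R : Set (Rule σ V)} {t : Term σ V} :
    ∀ (k : ℕ) (π : List ℕ), π ∈ PosD R t → t.size - π.length ≤ k →
      ∃ π₁ ∈ PosD R t, π <+: π₁ ∧ ∀ τ ∈ PosD R t, ¬ PosGT τ π₁ := by
  intro k
  induction k with
  | zero => intro π hπ hk; have := posD_length hπ; omega
  | succ k ih =>
    intro π hπ hk
    by_cases h : ∃ τ ∈ PosD R t, PosGT τ π
    · obtain ⟨τ, hτ, hgt⟩ := h
      have hlen := posGT_length hgt
      have hlen2 := posD_length hτ
      obtain ⟨π₁, h1, h2, h3⟩ := ih τ hτ (by omega)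
      exact ⟨π₁, h1, (prefix_of_posGT hgt).trans h2, h3⟩
    · push_neg at h
      exact ⟨π, hπ, List.prefix_refl _, h⟩

open Classical in
/-- The list of strict `PosD`-prefixes of `π₁`, in decreasing order. -/
noncomputable def restOf (R : Set (Rule σ V)) (t : Term σ V) (π₁ : List ℕ) : List (List ℕ) :=
  ((List.range π₁.length).reverse.map (π₁.take ·)).filter (fun π => decide (π ∈ PosD R t))

theorem posGT_take {π₁ : List ℕ} {a b : ℕ} (hab : a < b) (hb : b ≤ π₁.length) :
    PosGT (π₁.take b) (π₁.take a) := by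
  refine ⟨(π₁.take b).drop a, ?_, ?_⟩
  · intro h
    have : (π₁.take b).length - a = 0 := by rw [← List.length_drop, h]; rfl
    rw [List.length_take] at this
    omega
  · have h : (π₁.take b).take a = π₁.take a := by
      rw [List.take_take]; congr 1; omega
    rw [← h, List.take_append_drop]

theorem mem_restOf {R : Set (Rule σ V)} {t : Term σ V} {π₁ π : List ℕ} :
    π ∈ restOf R t π₁ ↔ (∃ k < π₁.length, π = π₁.take k) ∧ π ∈ PosD R t := by
  classical
  simp only [restOf, List.mem_filter, List.mem_map, List.mem_reverse, List.mem_range,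
    decide_eq_true_eq]
  constructor
  · rintro ⟨⟨k, hk, rfl⟩, h2⟩; exact ⟨⟨k, hk, rfl⟩, h2⟩
  · rintro ⟨⟨k, hk, rfl⟩, h2⟩; exact ⟨⟨k, hk, rfl⟩, h2⟩

theorem chain'_cons_restOf {R : Set (Rule σ V)} {t : Term σ V} {π₁ : List ℕ} :
    List.Chain' PosGT (π₁ :: restOf R t π₁) := by
  classical
  unfold List.Chain'
  rw [List.isChain_iff_pairwise]
  have hF : List.Pairwise PosGT
      (((List.range (π₁.length + 1)).reverse.map (π₁.take ·))) := by
    rw [List.pairwise_map, List.pairwise_reverse]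
    refine (List.pairwise_lt_range (n := π₁.length + 1)).imp_of_mem ?_
    intro a b ha hb hab
    rw [List.mem_range] at hb
    exact posGT_take hab (by omega)
  have hFeq : ((List.range (π₁.length + 1)).reverse.map (π₁.take ·)) =
      π₁ :: ((List.range π₁.length).reverse.map (π₁.take ·)) := by
    rw [List.range_succ, List.reverse_append]
    simp [List.take_length]
  rw [hFeq] at hF
  refine List.Pairwise.sublist ?_ hF
  exact List.Sublist.cons₂ π₁ List.filter_sublist

theorem msdc_chainOf {R : Set (Rule σ V)} {t : Term σ V} {π₁ : List ℕ}
    (hπ₁ : π₁ ∈ PosD R t) (hmax : ∀ τ ∈ PosD R t, ¬ PosGT τ π₁) :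
    MSDC R t (π₁ :: restOf R t π₁) := by
  constructor
  · constructor
    · intro π hπ
      rcases List.mem_cons.1 hπ with rfl | hπ
      · exact hπ₁
      · exact (mem_restOf.1 hπ).2
    · exact chain'_cons_restOf
  · refine Or.inr ⟨π₁, restOf R t π₁, rfl, ?_⟩
    intro π hπ
    refine ⟨hmax π hπ, fun hgt => ?_⟩
    obtain ⟨s, hs, hsa⟩ := hgt
    have hπeq : π = π₁.take π.length := by
      rw [← hsa, List.take_left]
    have hlt : π.length < π₁.length := posGT_length ⟨s, hs, hsa⟩
    exact mem_restOf.2 ⟨⟨π.length, hlt, hπeq⟩, hπ⟩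

theorem posD_subset_msdc {R : Set (Rule σ V)} {t : Term σ V} {c : List (List ℕ)}
    (hu : ∀ c', MSDC R t c' → c' = c) (hc : MSDC R t c) :
    ∀ π ∈ PosD R t, π ∈ c := by
  intro π hπ
  rcases hc.2 with ⟨_, hempty⟩ | ⟨π₁, rest, hceq, hmaxc⟩
  · rw [hempty] at hπ; exact absurd hπ (Set.notMem_empty π)
  · obtain ⟨π₁', h1, h2, h3⟩ := exists_max_posD t.size π hπ (by omega)
    have hmsdc' := msdc_chainOf h1 h3
    have := hu _ hmsdc'
    rw [hceq] at this
    have hhead : π₁' = π₁ := (List.cons.injEq _ _ _ _ ▸ this).1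
    subst hhead
    by_cases hne : π = π₁'
    · rw [hceq, hne]; exact List.mem_cons_self
    · have hgt : PosGT π₁' π := posGT_of_prefix_ne h2 hne
      rw [hceq]
      exact List.mem_cons.2 (Or.inr ((hmaxc π hπ).2 hgt))

theorem nodup_of_chain'_posGT {c : List (List ℕ)} (h : List.Chain' PosGT c) : c.Nodup := by
  unfold List.Chain' at h
  rw [List.isChain_iff_pairwise] at h
  exact h.imp posGT_ne

theorem forall₂_subterm_unique {α β : Type*} {f : α → Option β} :
    ∀ {l : List α} {us₁ us₂ : List β},
      List.Forall₂ (fun π u => f π = some u) l us₁ →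
      List.Forall₂ (fun π u => f π = some u) l us₂ → us₁ = us₂ := by
  intro l
  induction l with
  | nil =>
    intro us₁ us₂ h1 h2; cases h1; cases h2; rfl
  | cons a l ih =>
    intro us₁ us₂ h1 h2
    cases h1 with
    | cons hr1 h1' =>
      cases h2 with
      | cons hr2 h2' =>
        rw [ih h1' h2']
        congr 1
        exact Option.some.inj (hr1.symm.trans hr2)

end Aux3

/-- If `|MSDC(r)| = 1` for every rule `ℓ → r ∈ R`, then
`DTpar(ℓ → r) = {DT(ℓ → r)}` for every rule (where `DT(ℓ → r)` is built from
any enumeration of `PosD(r)` that is decreasing wrt any strict total order on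
positions extending the strict prefix order); consequently `DTpar(R) = DT(R)`. -/
theorem dtpar_eq_dt_of_unique_msdc
    {σ V : Type} [Finite σ] (R : Set (Rule σ V)) (hR : IsWfTRS R)
    (hOne : ∀ ρ ∈ R, ∃! c : List (List ℕ), MSDC R ρ.rhs c) :
    (∀ ρ ∈ R, ∀ gt' : List ℕ → List ℕ → Prop, TotalExtOfPrefix gt' →
      ∀ ps : List (List ℕ), ps.Nodup → (∀ π, π ∈ ps ↔ π ∈ PosD R ρ.rhs) →
        ps.Chain' gt' →
        ∀ us : List (Term σ V),
          List.Forall₂ (fun π u => ρ.rhs.subtermAt π = some u) ps us →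
          DTparRule R ρ = {mkDT R ρ us}) ∧
    (∀ dt : Rule σ V → Rule (SharpSym σ) V,
      (∀ ρ ∈ R, ∃ (gt' : List ℕ → List ℕ → Prop) (ps : List (List ℕ))
          (us : List (Term σ V)),
        TotalExtOfPrefix gt' ∧ ps.Nodup ∧ (∀ π, π ∈ ps ↔ π ∈ PosD R ρ.rhs) ∧
        ps.Chain' gt' ∧
        List.Forall₂ (fun π u => ρ.rhs.subtermAt π = some u) ps us ∧
        dt ρ = mkDT R ρ us) →
      DTparSet R = ⋃ ρ ∈ R, {dt ρ}) := by
  have hpart1 : ∀ ρ ∈ R, ∀ gt' : List ℕ → List ℕ → Prop, TotalExtOfPrefix gt' →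
      ∀ ps : List (List ℕ), ps.Nodup → (∀ π, π ∈ ps ↔ π ∈ PosD R ρ.rhs) →
        ps.Chain' gt' →
        ∀ us : List (Term σ V),
          List.Forall₂ (fun π u => ρ.rhs.subtermAt π = some u) ps us →
          DTparRule R ρ = {mkDT R ρ us} := by
    intro ρ hρ gt' hgt' ps hnodup hmem hchain us hus
    obtain ⟨c, hc, huniq⟩ := hOne ρ hρ
    have hu : ∀ c', MSDC R ρ.rhs c' → c' = c := fun c' h => huniq c' h
    haveI : IsTrans (List ℕ) gt' := ⟨fun a b d => hgt'.2.1 a b d⟩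
    haveI : IsAntisymm (List ℕ) gt' :=
      ⟨fun a b h1 h2 => absurd h1 (hgt'.2.2.1 b a h2)⟩
    have hcmem : ∀ π, π ∈ c ↔ π ∈ PosD R ρ.rhs := by
      intro π
      exact ⟨fun h => hc.1.1 π h, fun h => posD_subset_msdc hu hc π h⟩
    have hcnodup : c.Nodup := nodup_of_chain'_posGT hc.1.2
    have hperm : c.Perm ps := by
      rw [List.perm_ext_iff_of_nodup hcnodup hnodup]
      intro a
      rw [hcmem a, hmem a]
    have hcsorted : List.Pairwise gt' c := by
      have := (List.isChain_iff_pairwise (R := PosGT)).1 hc.1.2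
      exact this.imp fun {a b} h => hgt'.1 a b h
    have hpssorted : List.Pairwise gt' ps := (List.isChain_iff_pairwise).1 hchain
    have hcps : c = ps := hperm.eq_of_pairwise (fun a b _ _ h1 h2 => absurd h1 (hgt'.2.2.1 b a h2)) hcsorted hpssorted
    ext d
    simp only [DTparRule, Set.mem_setOf_eq, Set.mem_singleton_iff]
    constructor
    · rintro ⟨c', us', hc', hf', rfl⟩
      have : c' = ps := (hu c' hc').trans hcps
      subst this
      rw [forall₂_subterm_unique hf' hus]
    · rintro rfl
      exact ⟨ps, us, hcps ▸ hc, hus, rfl⟩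
  refine ⟨hpart1, ?_⟩
  intro dt hdt
  have heach : ∀ ρ ∈ R, DTparRule R ρ = {dt ρ} := by
    intro ρ hρ
    obtain ⟨gt', ps, us, h1, h2, h3, h4, h5, h6⟩ := hdt ρ hρ
    rw [hpart1 ρ hρ gt' h1 ps h2 h3 h4 us h5, h6]
  unfold DTparSet
  exact Set.iUnion_congr fun ρ => Set.iUnion_congr fun hρ => heach ρ hρ

end ParallelComplexity
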